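/- arXiv:math/9302207 — 3 statements merged into one kernel-verified Lean document; each statement's English description precedes it below -/
import Mathlib

section
/- (Jameson's lemma.) Let 1 ≤ q < p ≤ ∞ and let T : X → Y be an absolutely q-summing bounded linear operator between real Banach spaces with π_{p,q}(T) > 0. Then there exists a natural number n with n ≤ (2^{1/p} · π_q(T)/π_{p,q}(T))^{1/(1/q − 1/p)} such that π_{p,q}(T) ≤ 2^{1/p} · π_{p,q}^n(T). -/
open scoped ENNReal NNReal BigOperators

noncomputable section

/-- The `ℓ_p`-sum `(∑ i, f i ^ p) ^ (1/p)` of a finite family in `ℝ≥0∞`,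
with the usual sup-modification for `p = ∞`. -/
def eSum (p : ℝ≥0∞) {ι : Type*} [Fintype ι] (f : ι → ℝ≥0∞) : ℝ≥0∞ :=
  if p = ∞ then ⨆ i, f i else (∑ i, f i ^ p.toReal) ^ (1 / p.toReal)

/-- The weak `ℓ_q`-norm of a finite family of vectors:
`sup { (∑ k |⟨x_k, x*⟩|^q)^(1/q) : x* in the unit ball of the dual }`. -/
def weakLq (q : ℝ≥0∞) {X : Type*} [NormedAddCommGroup X] [NormedSpace ℝ X]
    {n : ℕ} (x : Fin n → X) : ℝ≥0∞ :=
  ⨆ f : {f : X →L[ℝ] ℝ // ‖f‖ ≤ 1}, eSum q fun k => ENNReal.ofReal |f.1 (x k)|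

/-- The `(p,q)`-summing norm of `T` with respect to `n` vectors. -/
def piN (p q : ℝ≥0∞) {X Y : Type*} [NormedAddCommGroup X] [NormedSpace ℝ X]
    [NormedAddCommGroup Y] [NormedSpace ℝ Y] (n : ℕ) (T : X →L[ℝ] Y) : ℝ≥0∞ :=
  ⨆ x : {x : Fin n → X // weakLq q x ≤ 1}, eSum p fun k => ENNReal.ofReal ‖T (x.1 k)‖

/-- The `(p,q)`-summing norm of `T`. -/
def piPQ (p q : ℝ≥0∞) {X Y : Type*} [NormedAddCommGroup X] [NormedSpace ℝ X]
    [NormedAddCommGroup Y] [NormedSpace ℝ Y] (T : X →L[ℝ] Y) : ℝ≥0∞ :=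
  ⨆ n : ℕ, piN p q n T

/-- `T` has rank at most `n`: its range is a finite-dimensional subspace of
dimension at most `n`. -/
def RankLE {X Y : Type*} [NormedAddCommGroup X] [NormedSpace ℝ X]
    [NormedAddCommGroup Y] [NormedSpace ℝ Y] (T : X →L[ℝ] Y) (n : ℕ) : Prop :=
  FiniteDimensional ℝ (LinearMap.range (T : X →ₗ[ℝ] Y)) ∧
    Module.finrank ℝ (LinearMap.range (T : X →ₗ[ℝ] Y)) ≤ n

/-- The average of `‖∑ k, ε k • x k‖²` over all `2^n` sign choices `ε ∈ {-1,1}^n`. -/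
def radAvg {X : Type*} [NormedAddCommGroup X] [NormedSpace ℝ X] {n : ℕ}
    (x : Fin n → X) : ℝ :=
  (∑ ε : Fin n → Bool, ‖∑ k, (if ε k then (1 : ℝ) else -1) • x k‖ ^ 2) / 2 ^ n

/-- The Rademacher cotype `q` constant of `T` with respect to `n` vectors. -/
def cotypeN (q : ℝ) {X Y : Type*} [NormedAddCommGroup X] [NormedSpace ℝ X]
    [NormedAddCommGroup Y] [NormedSpace ℝ Y] (n : ℕ) (T : X →L[ℝ] Y) : ℝ≥0∞ :=
  ⨆ x : {x : Fin n → X // Real.sqrt (radAvg x) ≤ 1},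
    (∑ k, ENNReal.ofReal ‖T (x.1 k)‖ ^ q) ^ (1 / q)

/-- The Rademacher cotype `q` constant of `T`. -/
def cotype (q : ℝ) {X Y : Type*} [NormedAddCommGroup X] [NormedSpace ℝ X]
    [NormedAddCommGroup Y] [NormedSpace ℝ Y] (T : X →L[ℝ] Y) : ℝ≥0∞ :=
  ⨆ n : ℕ, cotypeN q n T


namespace JamesonAux

open Finset

variable {X Y : Type*} [NormedAddCommGroup X] [NormedSpace ℝ X]
  [NormedAddCommGroup Y] [NormedSpace ℝ Y]

lemma rpow_one_div_rpow (x : ℝ≥0∞) {a : ℝ} (ha : a ≠ 0) : ((x ^ a) ^ (1 / a)) = x := by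
  rw [← ENNReal.rpow_mul, one_div, mul_inv_cancel₀ ha, ENNReal.rpow_one]

lemma rpow_rpow_one_div (x : ℝ≥0∞) {a : ℝ} (ha : a ≠ 0) : ((x ^ (1 / a)) ^ a) = x := by
  rw [← ENNReal.rpow_mul, one_div, inv_mul_cancel₀ ha, ENNReal.rpow_one]

lemma sum_rpow_le {n : ℕ} (f : Fin n → ℝ≥0∞) {a b : ℝ} (ha : 0 < a) (hab : a ≤ b) :
    (∑ i, f i ^ b) ^ (1 / b) ≤ (∑ i, f i ^ a) ^ (1 / a) := by
  have hb : 0 < b := lt_of_lt_of_le ha hab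
  rcases eq_or_ne (∑ i, f i ^ a) ⊤ with hST | hST
  · rw [hST, ENNReal.top_rpow_of_pos (by positivity)]; exact le_top
  rcases eq_or_ne (∑ i, f i ^ a) 0 with hS0 | hS0
  · have hf : ∀ i ∈ Finset.univ, f i ^ b = 0 := by
      intro i _
      have h0 : f i ^ a = 0 := by
        have := (Finset.sum_eq_zero_iff.mp hS0) i (mem_univ i)
        exact this
      have : f i = 0 := by
        rcases ENNReal.rpow_eq_zero_iff.mp h0 with ⟨h, _⟩ | ⟨_, h⟩
        · exact h
        · exact absurd h (not_lt.mpr ha.le)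
      rw [this, ENNReal.zero_rpow_of_pos hb]
    rw [Finset.sum_eq_zero hf, ENNReal.zero_rpow_of_pos (by positivity)]
    exact zero_le
  have key : ∀ i, f i ^ b ≤ f i ^ a * (∑ j, f j ^ a) ^ ((b - a) / a) := by
    intro i
    rcases eq_or_ne (f i) 0 with h0 | h0
    · rw [h0, ENNReal.zero_rpow_of_pos hb]; exact zero_le
    have hfT : f i ≠ ⊤ := by
      intro h
      apply hST
      refine top_le_iff.mp ?_
      calc (⊤ : ℝ≥0∞) = f i ^ a := by rw [h, ENNReal.top_rpow_of_pos ha]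
        _ ≤ ∑ j, f j ^ a :=
          Finset.single_le_sum (f := fun j => f j ^ a) (fun j _ => zero_le) (mem_univ i)
    have h1 : f i ^ a ≤ ∑ j, f j ^ a :=
      Finset.single_le_sum (f := fun j => f j ^ a) (fun j _ => zero_le) (mem_univ i)
    calc f i ^ b = f i ^ a * f i ^ (b - a) := by
          rw [← ENNReal.rpow_add _ _ h0 hfT]; congr 1; ring
      _ ≤ f i ^ a * (∑ j, f j ^ a) ^ ((b - a) / a) := by
          refine mul_le_mul_right ?_ _
          have h2 : f i ^ (b - a) = (f i ^ a) ^ ((b - a) / a) := by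
            rw [← ENNReal.rpow_mul]; congr 1; field_simp; all_goals ring
          rw [h2]
          exact ENNReal.rpow_le_rpow h1 (div_nonneg (sub_nonneg.mpr hab) ha.le)
  have hsum : ∑ i, f i ^ b ≤ (∑ j, f j ^ a) ^ (b / a) := by
    calc ∑ i, f i ^ b ≤ ∑ i, f i ^ a * (∑ j, f j ^ a) ^ ((b - a) / a) :=
          Finset.sum_le_sum fun i _ => key i
      _ = (∑ j, f j ^ a) * (∑ j, f j ^ a) ^ ((b - a) / a) := by rw [← Finset.sum_mul]
      _ = (∑ j, f j ^ a) ^ ((1 : ℝ)) * (∑ j, f j ^ a) ^ ((b - a) / a) := by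
          rw [ENNReal.rpow_one]
      _ = (∑ j, f j ^ a) ^ (1 + (b - a) / a) := by
          rw [← ENNReal.rpow_add _ _ hS0 hST]
      _ = (∑ j, f j ^ a) ^ (b / a) := by congr 1; field_simp; all_goals ring
  calc (∑ i, f i ^ b) ^ (1 / b) ≤ ((∑ j, f j ^ a) ^ (b / a)) ^ (1 / b) :=
        ENNReal.rpow_le_rpow hsum (by positivity)
    _ = (∑ j, f j ^ a) ^ (1 / a) := by
        rw [← ENNReal.rpow_mul]; congr 1; field_simp; all_goals ring

lemma iSup_le_sum_rpow {n : ℕ} (f : Fin n → ℝ≥0∞) {a : ℝ} (ha : 0 < a) :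
    (⨆ i, f i) ≤ (∑ i, f i ^ a) ^ (1 / a) := by
  refine iSup_le fun i => ?_
  have h1 : f i ^ a ≤ ∑ j, f j ^ a :=
      Finset.single_le_sum (f := fun j => f j ^ a) (fun j _ => zero_le) (mem_univ i)
  calc f i = (f i ^ a) ^ (1 / a) := (rpow_one_div_rpow _ ha.ne').symm
    _ ≤ _ := ENNReal.rpow_le_rpow h1 (by positivity)

lemma eSum_le_eSum {n : ℕ} (f : Fin n → ℝ≥0∞) {p q : ℝ≥0∞} (hq : q ≠ ∞)
    (hq0 : 0 < q.toReal) (hpq : q ≤ p) : eSum p f ≤ eSum q f := by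
  rcases eq_or_ne p ∞ with hp | hp
  · simp only [eSum, hp, if_pos rfl, if_neg hq]
    exact iSup_le_sum_rpow f hq0
  · simp only [eSum, if_neg hp, if_neg hq]
    exact sum_rpow_le f hq0 ((ENNReal.toReal_le_toReal hq hp).mpr hpq)

lemma piPQ_le_piPQ (T : X →L[ℝ] Y) {p q : ℝ≥0∞} (hq : q ≠ ∞) (hq0 : 0 < q.toReal)
    (hpq : q ≤ p) : piPQ p q T ≤ piPQ q q T :=
  iSup_mono fun _ => iSup_mono fun _ => eSum_le_eSum _ hq hq0 hpq

lemma sum_sel {N m n : ℕ} (A : Finset (Fin N)) (hA : A.card = m) (hmn : m ≤ n)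
    (x : Fin N → X) (F : X → ℝ≥0∞) (hF : F 0 = 0) :
    (∑ j : Fin n, F (if h : (j : ℕ) < m then x (A.orderEmbOfFin hA ⟨j, h⟩) else 0))
      = ∑ k ∈ A, F (x k) := by
  rw [Fin.sum_univ_eq_sum_range
    (fun j => F (if h : j < m then x (A.orderEmbOfFin hA ⟨j, h⟩) else 0)) n]
  rw [← Finset.sum_subset (Finset.range_subset_range.mpr hmn) (fun j _ hj => by
      rw [dif_neg (by simpa using hj), hF])]
  rw [← Fin.sum_univ_eq_sum_range
    (fun j => F (if h : j < m then x (A.orderEmbOfFin hA ⟨j, h⟩) else 0)) m]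
  rw [Finset.sum_congr rfl (fun (j : Fin m) _ => by rw [dif_pos j.2])]
  refine Finset.sum_bij (fun (j : Fin m) _ => A.orderEmbOfFin hA j)
    (fun j _ => A.orderEmbOfFin_mem hA j)
    (fun a _ b _ h => (A.orderEmbOfFin hA).injective h) (fun k hk => ?_) ?_
  · have : (k : Fin N) ∈ Set.range (A.orderEmbOfFin hA) := by
      rw [Finset.range_orderEmbOfFin]; exact hk
    obtain ⟨j, hj⟩ := this
    exact ⟨j, mem_univ j, hj⟩
  · intro j _
    simp

lemma head_bound (T : X →L[ℝ] Y) {p q : ℝ≥0∞} (hq : q ≠ ∞) (hp : p ≠ ∞)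
    (hq0 : 0 < q.toReal) (hp0 : 0 < p.toReal) {N n : ℕ} (x : Fin N → X)
    (hx : weakLq q x ≤ 1) (A : Finset (Fin N)) (hA : A.card ≤ n) :
    ∑ k ∈ A, ENNReal.ofReal ‖T (x k)‖ ^ p.toReal ≤ piN p q n T ^ p.toReal := by
  set y : Fin n → X :=
    fun j => if h : (j : ℕ) < A.card then x (A.orderEmbOfFin rfl ⟨j, h⟩) else 0 with hy
  have hsum : ∀ (F : X → ℝ≥0∞), F 0 = 0 → ∑ j : Fin n, F (y j) = ∑ k ∈ A, F (x k) :=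
    fun F hF => sum_sel A rfl hA x F hF
  have hyw : weakLq q y ≤ 1 := by
    refine le_trans (iSup_le fun f => ?_) hx
    refine le_trans ?_ (le_iSup _ f)
    simp only [eSum, if_neg hq]
    refine ENNReal.rpow_le_rpow ?_ (by positivity)
    rw [hsum (fun z => ENNReal.ofReal |f.1 z| ^ q.toReal)
      (by simp [ENNReal.zero_rpow_of_pos hq0])]
    exact Finset.sum_le_sum_of_subset (Finset.subset_univ A)
  have hkey : ∑ k ∈ A, ENNReal.ofReal ‖T (x k)‖ ^ p.toReal
      = (eSum p fun k => ENNReal.ofReal ‖T (y k)‖) ^ p.toReal := by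
    simp only [eSum, if_neg hp]
    rw [rpow_rpow_one_div _ hp0.ne',
      hsum (fun z => ENNReal.ofReal ‖T z‖ ^ p.toReal)
        (by simp [ENNReal.zero_rpow_of_pos hp0])]
  rw [hkey]
  exact ENNReal.rpow_le_rpow
    (le_iSup (fun z : {z : Fin n → X // weakLq q z ≤ 1} =>
      eSum p fun k => ENNReal.ofReal ‖T (z.1 k)‖) ⟨y, hyw⟩) hp0.le

lemma family_bound (T : X →L[ℝ] Y) {p q : ℝ≥0∞} (hq : q ≠ ∞) (hp : p ≠ ∞)
    (hq0 : 0 < q.toReal) (hqp : q.toReal < p.toReal) (hC : piPQ q q T ≠ ∞)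
    (n N : ℕ) (x : Fin N → X) (hx : weakLq q x ≤ 1) :
    ∑ k, ENNReal.ofReal ‖T (x k)‖ ^ p.toReal
      ≤ piN p q n T ^ p.toReal +
        piPQ q q T ^ q.toReal * (piPQ q q T ^ q.toReal / ((n : ℝ≥0∞) + 1)) ^
          ((p.toReal - q.toReal) / q.toReal) := by
  classical
  set Q := q.toReal
  set P := p.toReal
  set C := piPQ q q T with hCdef
  set s : Fin N → ℝ≥0∞ := fun k => ENNReal.ofReal ‖T (x k)‖ with hs
  have hP0 : 0 < P := hq0.trans hqp
  have hsQ : ∑ k, s k ^ Q ≤ C ^ Q := by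
    have h1 : eSum q s ≤ C :=
      le_trans (le_iSup (fun z : {z : Fin N → X // weakLq q z ≤ 1} =>
          eSum q fun k => ENNReal.ofReal ‖T (z.1 k)‖) ⟨x, hx⟩)
        (le_iSup (fun N => piN q q N T) N)
    calc ∑ k, s k ^ Q = (eSum q s) ^ Q := by
          simp only [eSum, if_neg hq]
          rw [rpow_rpow_one_div _ hq0.ne']
      _ ≤ C ^ Q := ENNReal.rpow_le_rpow h1 hq0.le
  set c : ℝ≥0∞ := C ^ Q / ((n : ℝ≥0∞) + 1) with hc
  have hCQt : C ^ Q ≠ ∞ := ENNReal.rpow_ne_top_of_nonneg hq0.le hC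
  set A : Finset (Fin N) := Finset.univ.filter (fun k => c < s k ^ Q) with hA
  have hAcard : A.card ≤ n := by
    by_contra hcon
    push_neg at hcon
    have hne : A.Nonempty := Finset.card_pos.mp (lt_of_le_of_lt (Nat.zero_le n) hcon)
    have h2 : ∑ k ∈ A, s k ^ Q ≤ ∑ k ∈ A, c := by
      calc ∑ k ∈ A, s k ^ Q ≤ C ^ Q :=
            le_trans (Finset.sum_le_sum_of_subset (Finset.subset_univ A)) hsQ
        _ = ((n : ℝ≥0∞) + 1) * c := by
            rw [hc, ENNReal.mul_div_cancel (lt_of_lt_of_le one_pos le_add_self).ne' (by simp)]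
        _ ≤ (A.card : ℝ≥0∞) * c := by
            refine mul_le_mul_left ?_ c
            exact_mod_cast Nat.succ_le_of_lt hcon
        _ = ∑ k ∈ A, c := by rw [Finset.sum_const, nsmul_eq_mul]
    obtain ⟨k, hk, hk2⟩ := ENNReal.exists_le_of_sum_le hne h2
    exact absurd hk2 (not_le.mpr (Finset.mem_filter.mp hk).2)
  have hhead : ∑ k ∈ A, s k ^ P ≤ piN p q n T ^ P := head_bound T hq hp hq0 hP0 x hx A hAcard
  have htail : ∑ k ∈ Finset.univ.filter (fun k => ¬ c < s k ^ Q), s k ^ P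
      ≤ C ^ Q * c ^ ((P - Q) / Q) := by
    have hterm : ∀ k ∈ Finset.univ.filter (fun k => ¬ c < s k ^ Q),
        s k ^ P ≤ s k ^ Q * c ^ ((P - Q) / Q) := by
      intro k hk
      have hkc : s k ^ Q ≤ c := not_lt.mp (Finset.mem_filter.mp hk).2
      rcases eq_or_ne (s k) 0 with h0 | h0
      · rw [h0, ENNReal.zero_rpow_of_pos hP0]; exact zero_le
      have hkt : s k ≠ ∞ := ENNReal.ofReal_ne_top
      calc s k ^ P = s k ^ Q * s k ^ (P - Q) := by
            rw [← ENNReal.rpow_add _ _ h0 hkt]; congr 1; ring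
        _ ≤ s k ^ Q * c ^ ((P - Q) / Q) := by
            refine mul_le_mul_right ?_ _
            have h2 : s k ^ (P - Q) = (s k ^ Q) ^ ((P - Q) / Q) := by
              rw [← ENNReal.rpow_mul]; congr 1; field_simp; all_goals ring
            rw [h2]
            exact ENNReal.rpow_le_rpow hkc (div_nonneg (sub_nonneg.mpr hqp.le) hq0.le)
    calc ∑ k ∈ Finset.univ.filter (fun k => ¬ c < s k ^ Q), s k ^ P
        ≤ ∑ k ∈ Finset.univ.filter (fun k => ¬ c < s k ^ Q), s k ^ Q * c ^ ((P - Q) / Q) :=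
          Finset.sum_le_sum hterm
      _ = (∑ k ∈ Finset.univ.filter (fun k => ¬ c < s k ^ Q), s k ^ Q) * c ^ ((P - Q) / Q) := by
          rw [← Finset.sum_mul]
      _ ≤ C ^ Q * c ^ ((P - Q) / Q) :=
          mul_le_mul_left
            (le_trans (Finset.sum_le_sum_of_subset (Finset.subset_univ _)) hsQ) _
  calc ∑ k, s k ^ P
      = ∑ k ∈ A, s k ^ P + ∑ k ∈ Finset.univ.filter (fun k => ¬ c < s k ^ Q), s k ^ P :=
        (Finset.sum_filter_add_sum_filter_not Finset.univ (fun k => c < s k ^ Q) _).symm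
    _ ≤ _ := add_le_add hhead htail

lemma pi_bound (T : X →L[ℝ] Y) {p q : ℝ≥0∞} (hq : q ≠ ∞) (hp : p ≠ ∞)
    (hq0 : 0 < q.toReal) (hqp : q.toReal < p.toReal) (hC : piPQ q q T ≠ ∞) (n : ℕ) :
    piPQ p q T ^ p.toReal ≤ piN p q n T ^ p.toReal +
      piPQ q q T ^ q.toReal * (piPQ q q T ^ q.toReal / ((n : ℝ≥0∞) + 1)) ^
        ((p.toReal - q.toReal) / q.toReal) := by
  have hP0 : 0 < p.toReal := hq0.trans hqp
  have h2 : piPQ p q T ≤ (piN p q n T ^ p.toReal +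
      piPQ q q T ^ q.toReal * (piPQ q q T ^ q.toReal / ((n : ℝ≥0∞) + 1)) ^
        ((p.toReal - q.toReal) / q.toReal)) ^ (1 / p.toReal) := by
    refine iSup_le fun N => iSup_le fun x => ?_
    simp only [eSum, if_neg hp]
    exact ENNReal.rpow_le_rpow (family_bound T hq hp hq0 hqp hC n N x.1 x.2) (by positivity)
  calc piPQ p q T ^ p.toReal ≤ _ := ENNReal.rpow_le_rpow h2 hP0.le
    _ = _ := rpow_rpow_one_div _ hP0.ne'

end JamesonAux

/-- Jameson's lemma: for `1 ≤ q < p ≤ ∞` and an absolutely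
`q`-summing operator `T` with `π_{p,q}(T) > 0`, there is
`n ≤ (2^{1/p} π_q(T)/π_{p,q}(T))^{1/(1/q - 1/p)}` with
`π_{p,q}(T) ≤ 2^{1/p} π_{p,q}^n(T)`. -/
theorem statement6 (q p : ℝ≥0∞) (hq : 1 ≤ q) (hqp : q < p)
    (X Y : Type*) [NormedAddCommGroup X] [NormedSpace ℝ X] [CompleteSpace X]
    [NormedAddCommGroup Y] [NormedSpace ℝ Y] [CompleteSpace Y]
    (T : X →L[ℝ] Y) (hqsum : piPQ q q T < ∞) (hpos : 0 < piPQ p q T) :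
    ∃ n : ℕ,
      (n : ℝ≥0∞) ≤ ((2 : ℝ≥0∞) ^ (1 / p.toReal) * piPQ q q T / piPQ p q T) ^
          (1 / (1 / q.toReal - 1 / p.toReal)) ∧
      piPQ p q T ≤ (2 : ℝ≥0∞) ^ (1 / p.toReal) * piN p q n T := by
  classical
  have hq8 : q ≠ ∞ := hqp.ne_top
  have hQ1 : (1 : ℝ) ≤ q.toReal := by
    rw [← ENNReal.toReal_one]; exact ENNReal.toReal_mono hq8 hq
  have hQ0 : 0 < q.toReal := lt_of_lt_of_le one_pos hQ1
  have hC : piPQ q q T ≠ ∞ := hqsum.ne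
  rcases eq_or_ne p ∞ with hp | hp
  · subst hp
    have hpiC : piPQ ⊤ q T ≤ piPQ q q T := JamesonAux.piPQ_le_piPQ T hq8 hQ0 le_top
    refine ⟨1, ?_, ?_⟩
    · have h1 : (1 : ℝ≥0∞) ≤ (2 : ℝ≥0∞) ^ (1 / (⊤ : ℝ≥0∞).toReal) * piPQ q q T / piPQ ⊤ q T := by
        have hpit : piPQ ⊤ q T ≠ ∞ := (lt_of_le_of_lt hpiC hqsum).ne
        rw [ENNReal.le_div_iff_mul_le (Or.inl hpos.ne') (Or.inl hpit), one_mul]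
        simpa using hpiC
      have hexp : (0 : ℝ) < 1 / (1 / q.toReal - 1 / (⊤ : ℝ≥0∞).toReal) := by
        simp only [ENNReal.toReal_top, div_zero, sub_zero, one_div_one_div]
        exact hQ0
      rw [Nat.cast_one]
      exact ENNReal.one_le_rpow h1 hexp
    · have h2 : piPQ ⊤ q T ≤ piN ⊤ q 1 T := by
        refine iSup_le fun N => iSup_le fun x => ?_
        simp only [eSum, if_pos rfl]
        refine iSup_le fun k => ?_
        set y : Fin 1 → X := fun _ => x.1 k with hy
        have hyw : weakLq q y ≤ 1 := by
          refine le_trans (iSup_le fun f => ?_) x.2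
          refine le_trans ?_ (le_iSup _ f)
          simp only [eSum, if_neg hq8]
          refine ENNReal.rpow_le_rpow ?_ (by positivity)
          rw [Fin.sum_univ_one]
          exact Finset.single_le_sum (f := fun j => ENNReal.ofReal |f.1 (x.1 j)| ^ q.toReal)
            (fun j _ => zero_le) (Finset.mem_univ k)
        refine le_trans ?_ (le_iSup (fun z : {z : Fin 1 → X // weakLq q z ≤ 1} =>
          eSum ⊤ fun j => ENNReal.ofReal ‖T (z.1 j)‖) ⟨y, hyw⟩)
        simp [eSum, hy, ciSup_const]
      calc piPQ ⊤ q T ≤ piN ⊤ q 1 T := h2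
        _ = 1 * piN ⊤ q 1 T := (one_mul _).symm
        _ ≤ (2 : ℝ≥0∞) ^ (1 / (⊤ : ℝ≥0∞).toReal) * piN ⊤ q 1 T := by simp
  · have hQP : q.toReal < p.toReal := (ENNReal.toReal_lt_toReal hq8 hp).mpr hqp
    have hP0 : 0 < p.toReal := hQ0.trans hQP
    set Q := q.toReal with hQdef
    set P := p.toReal with hPdef
    set C := piPQ q q T with hCdef
    set pp := piPQ p q T with hppdef
    have hpiC : pp ≤ C := JamesonAux.piPQ_le_piPQ T hq8 hQ0 hqp.le
    have hpi : pp ≠ ∞ := (lt_of_le_of_lt hpiC hqsum).ne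
    have hpi0 : pp ≠ 0 := hpos.ne'
    have hC0 : C ≠ 0 := fun h => hpi0 (le_antisymm (h ▸ hpiC) zero_le)
    have hb0fin : (2 : ℝ≥0∞) ^ (1 / P) * C / pp ≠ ∞ := by
      rw [div_eq_mul_inv]
      exact ENNReal.mul_ne_top
        (ENNReal.mul_ne_top
          (ENNReal.rpow_ne_top_of_nonneg (by positivity) ENNReal.ofNat_ne_top) hC)
        (ENNReal.inv_ne_top.mpr hpi0)
    have hiq : (0 : ℝ) < 1 / Q - 1 / P := sub_pos.mpr (one_div_lt_one_div_of_lt hQ0 hQP)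
    set B := ((2 : ℝ≥0∞) ^ (1 / P) * C / pp) ^ (1 / (1 / Q - 1 / P)) with hBdef
    have hBfin : B ≠ ∞ :=
      ENNReal.rpow_ne_top_of_nonneg (one_div_nonneg.mpr hiq.le) hb0fin
    refine ⟨⌊B.toReal⌋₊, ?_, ?_⟩
    · calc ((⌊B.toReal⌋₊ : ℕ) : ℝ≥0∞) = ENNReal.ofReal (⌊B.toReal⌋₊ : ℝ) :=
            (ENNReal.ofReal_natCast _).symm
        _ ≤ ENNReal.ofReal B.toReal :=
            ENNReal.ofReal_le_ofReal (Nat.floor_le ENNReal.toReal_nonneg)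
        _ = B := ENNReal.ofReal_toReal hBfin
    · set n := ⌊B.toReal⌋₊ with hn
      have hBn : B ≤ (n : ℝ≥0∞) + 1 := by
        calc B = ENNReal.ofReal B.toReal := (ENNReal.ofReal_toReal hBfin).symm
          _ ≤ ENNReal.ofReal ((n : ℝ) + 1) :=
              ENNReal.ofReal_le_ofReal (Nat.lt_floor_add_one _).le
          _ = (n : ℝ≥0∞) + 1 := by
              rw [ENNReal.ofReal_add (by positivity) zero_le_one, ENNReal.ofReal_natCast,
                ENNReal.ofReal_one]
      set r : ℝ := (P - Q) / Q with hr
      have hr0 : 0 < r := div_pos (sub_pos.mpr hQP) hQ0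
      have hmain : pp ^ P ≤ piN p q n T ^ P + C ^ Q * (C ^ Q / ((n : ℝ≥0∞) + 1)) ^ r :=
        JamesonAux.pi_bound T hq8 hp hQ0 hQP hC n
      have hn1 : ((n : ℝ≥0∞) + 1) ≠ 0 := (lt_of_lt_of_le one_pos le_add_self).ne'
      have hn1t : ((n : ℝ≥0∞) + 1) ≠ ∞ := by simp
      have hexp : Q + Q * r = P := by rw [hr]; field_simp; ring
      have hD : C ^ Q * (C ^ Q / ((n : ℝ≥0∞) + 1)) ^ r = C ^ P / ((n : ℝ≥0∞) + 1) ^ r := by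
        rw [ENNReal.div_rpow_of_nonneg _ _ hr0.le, ← ENNReal.rpow_mul, ← mul_div_assoc,
          ← ENNReal.rpow_add _ _ hC0 hC, hexp]
      have hstep2 : 2 * C ^ P ≤ pp ^ P * ((n : ℝ≥0∞) + 1) ^ r := by
        have hEr : (1 / (1 / Q - 1 / P)) * r = P := by
          rw [hr]
          have h1 : 1 / Q - 1 / P = (P - Q) / (Q * P) := by field_simp
          rw [h1, one_div_div, div_mul_div_comm,
            div_eq_iff (mul_ne_zero (sub_ne_zero.mpr hQP.ne') hQ0.ne')]
          ring
        have h1 : ((2 : ℝ≥0∞) ^ (1 / P) * C / pp) ^ P ≤ ((n : ℝ≥0∞) + 1) ^ r := by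
          calc ((2 : ℝ≥0∞) ^ (1 / P) * C / pp) ^ P = B ^ r := by
                rw [hBdef, ← ENNReal.rpow_mul, hEr]
            _ ≤ ((n : ℝ≥0∞) + 1) ^ r := ENNReal.rpow_le_rpow hBn hr0.le
        have h2 : ((2 : ℝ≥0∞) ^ (1 / P) * C / pp) ^ P * pp ^ P = 2 * C ^ P := by
          rw [← ENNReal.mul_rpow_of_nonneg _ _ hP0.le, ENNReal.div_mul_cancel hpi0 hpi,
            ENNReal.mul_rpow_of_nonneg _ _ hP0.le, JamesonAux.rpow_rpow_one_div 2 hP0.ne']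
        calc 2 * C ^ P = ((2 : ℝ≥0∞) ^ (1 / P) * C / pp) ^ P * pp ^ P := h2.symm
          _ ≤ ((n : ℝ≥0∞) + 1) ^ r * pp ^ P := mul_le_mul_left h1 _
          _ = pp ^ P * ((n : ℝ≥0∞) + 1) ^ r := mul_comm _ _
      have hDle : C ^ P / ((n : ℝ≥0∞) + 1) ^ r ≤ pp ^ P / 2 := by
        rw [ENNReal.div_le_iff
          (ENNReal.rpow_pos (lt_of_lt_of_le one_pos le_add_self) hn1t).ne'
          (ENNReal.rpow_ne_top_of_nonneg hr0.le hn1t)]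
        rw [div_eq_mul_inv, mul_right_comm, ← div_eq_mul_inv]
        rw [ENNReal.le_div_iff_mul_le (Or.inl (by norm_num)) (Or.inl ENNReal.ofNat_ne_top),
          mul_comm]
        exact hstep2
      have h3 : pp ^ P ≤ piN p q n T ^ P + pp ^ P / 2 :=
        hmain.trans (add_le_add_right ((le_of_eq hD).trans hDle) _)
      have hppPfin : pp ^ P ≠ ∞ := ENNReal.rpow_ne_top_of_nonneg hP0.le hpi
      have h4 : pp ^ P / 2 ≤ piN p q n T ^ P := by
        rw [← ENNReal.sub_half hppPfin]
        exact tsub_le_iff_right.mpr h3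
      have h5 : pp ^ P ≤ 2 * piN p q n T ^ P := by
        rw [ENNReal.div_le_iff (by norm_num) ENNReal.ofNat_ne_top] at h4
        rw [mul_comm]; exact h4
      calc pp = (pp ^ P) ^ (1 / P) := (JamesonAux.rpow_one_div_rpow _ hP0.ne').symm
        _ ≤ (2 * piN p q n T ^ P) ^ (1 / P) := ENNReal.rpow_le_rpow h5 (by positivity)
        _ = 2 ^ (1 / P) * piN p q n T := by
            rw [ENNReal.mul_rpow_of_nonneg _ _ (by positivity),
              JamesonAux.rpow_one_div_rpow _ hP0.ne']

end
end

section
/- Let 1 ≤ p < ∞. For all real numbers α, c ≥ 1 and every bounded linear operator T : X → Y between real Banach spaces one has π_{p,1}^{⌊cα⌋}(T) ≤ (4c)^{1/p} · π_{p,1}^{⌊α⌋}(T), where ⌊·⌋ denotes the integer part. -/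
open scoped ENNReal NNReal BigOperators

noncomputable section

lemma eSum_one {ι : Type*} [Fintype ι] (f : ι → ℝ≥0∞) : eSum 1 f = ∑ i, f i := by
  simp [eSum]

lemma sum_pad {X : Type*} [NormedAddCommGroup X] {n N : ℕ} (h : n ≤ N)
    (x : Fin n → X) (F : X → ℝ≥0∞) (hF : F 0 = 0) :
    ∑ k : Fin N, F (if h' : (k : ℕ) < n then x ⟨k, h'⟩ else 0) =
      ∑ k : Fin n, F (x k) := by
  set g : ℕ → ℝ≥0∞ := fun i => if h' : i < n then F (x ⟨i, h'⟩) else 0 with hg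
  have h1 : ∀ k : Fin N, F (if h' : (k : ℕ) < n then x ⟨k, h'⟩ else 0) = g k := by
    intro k; by_cases h' : (k : ℕ) < n <;> simp [g, h', hF]
  have h2 : ∀ k : Fin n, F (x k) = g k := by
    intro k; simp [g, k.2]
  simp_rw [h1, h2]
  rw [Fin.sum_univ_eq_sum_range g, Fin.sum_univ_eq_sum_range g]
  symm
  apply Finset.sum_subset (Finset.range_subset_range.2 h)
  intro i _ hi
  simp [g, Finset.mem_range.not.mp hi]

lemma piN_mono {X Y : Type*} [NormedAddCommGroup X] [NormedSpace ℝ X]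
    [NormedAddCommGroup Y] [NormedSpace ℝ Y] (p : ℝ) (hp1 : 1 ≤ p)
    {n N : ℕ} (h : n ≤ N) (T : X →L[ℝ] Y) :
    piN (ENNReal.ofReal p) 1 n T ≤ piN (ENNReal.ofReal p) 1 N T := by
  have hp0 : 0 < p := by linarith
  apply iSup_le
  rintro ⟨x, hx⟩
  set x' : Fin N → X := fun k => if h' : (k : ℕ) < n then x ⟨k, h'⟩ else 0 with hx'def
  have hx' : weakLq 1 x' ≤ 1 := by
    refine le_trans ?_ hx
    rw [weakLq, weakLq]
    apply iSup_mono
    intro f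
    rw [eSum_one, eSum_one]
    simp only [x']
    rw [sum_pad h x (fun v => ENNReal.ofReal |f.1 v|) (by simp)]
  refine le_trans (le_of_eq ?_)
    (le_iSup _ (⟨x', hx'⟩ : {x : Fin N → X // weakLq 1 x ≤ 1}))
  rw [eSum, eSum, if_neg ENNReal.ofReal_ne_top, if_neg ENNReal.ofReal_ne_top]
  congr 1
  simp only [x']
  rw [sum_pad h x (fun v => ENNReal.ofReal ‖T v‖ ^ (ENNReal.ofReal p).toReal)
    (by simp [ENNReal.zero_rpow_of_pos, ENNReal.toReal_ofReal hp0.le, hp0])]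

lemma piN_block {X Y : Type*} [NormedAddCommGroup X] [NormedSpace ℝ X]
    [NormedAddCommGroup Y] [NormedSpace ℝ Y] (p : ℝ) (hp1 : 1 ≤ p)
    (m N : ℕ) (T : X →L[ℝ] Y) :
    piN (ENNReal.ofReal p) 1 (m * N) T ≤
      (m : ℝ≥0∞) ^ (1 / p) * piN (ENNReal.ofReal p) 1 N T := by
  have hp0 : 0 < p := by linarith
  have hpt : (ENNReal.ofReal p).toReal = p := ENNReal.toReal_ofReal hp0.le
  apply iSup_le
  rintro ⟨x, hx⟩
  set A := piN (ENNReal.ofReal p) 1 N T with hA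
  rw [eSum, if_neg ENNReal.ofReal_ne_top, hpt]
  have e : Fin m × Fin N ≃ Fin (m * N) := finProdFinEquiv
  rw [← Equiv.sum_comp e (fun j => ENNReal.ofReal ‖T (x j)‖ ^ p), Fintype.sum_prod_type]
  have key : ∀ i : Fin m,
      ∑ k : Fin N, ENNReal.ofReal ‖T (x (e (i, k)))‖ ^ p ≤ A ^ p := by
    intro i
    set xi : Fin N → X := fun k => x (e (i, k)) with hxi_def
    have hxi : weakLq 1 xi ≤ 1 := by
      refine le_trans ?_ hx
      rw [weakLq, weakLq]
      apply iSup_mono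
      intro f
      rw [eSum_one, eSum_one]
      have hinj : Function.Injective (fun k : Fin N => e (i, k)) := fun a b hab => by
        simpa using (Prod.mk.injEq .. ▸ (e.injective hab)).2
      calc ∑ k : Fin N, ENNReal.ofReal |f.1 (xi k)|
          = ∑ j ∈ Finset.univ.image (fun k : Fin N => e (i, k)),
              ENNReal.ofReal |f.1 (x j)| := by
            rw [Finset.sum_image (fun a _ b _ hab => hinj hab)]
        _ ≤ ∑ j : Fin (m * N), ENNReal.ofReal |f.1 (x j)| :=
            Finset.sum_le_sum_of_subset (Finset.subset_univ _)
    have h1 : eSum (ENNReal.ofReal p) (fun k => ENNReal.ofReal ‖T (xi k)‖) ≤ A :=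
      le_iSup (fun x : {x : Fin N → X // weakLq 1 x ≤ 1} =>
        eSum (ENNReal.ofReal p) fun k => ENNReal.ofReal ‖T (x.1 k)‖) ⟨xi, hxi⟩
    rw [eSum, if_neg ENNReal.ofReal_ne_top, hpt] at h1
    have h2 := ENNReal.rpow_le_rpow h1 hp0.le
    rwa [← ENNReal.rpow_mul, one_div, inv_mul_cancel₀ hp0.ne', ENNReal.rpow_one] at h2
  calc (∑ i : Fin m, ∑ k : Fin N, ENNReal.ofReal ‖T (x (e (i, k)))‖ ^ p) ^ (1 / p)
      ≤ (∑ _i : Fin m, A ^ p) ^ (1 / p) :=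
        ENNReal.rpow_le_rpow (Finset.sum_le_sum fun i _ => key i) (by positivity)
    _ = ((m : ℝ≥0∞) * A ^ p) ^ (1 / p) := by
        rw [Finset.sum_const, Finset.card_univ, Fintype.card_fin, nsmul_eq_mul]
    _ = (m : ℝ≥0∞) ^ (1 / p) * A := by
        rw [ENNReal.mul_rpow_of_nonneg _ _ (by positivity), ← ENNReal.rpow_mul,
          mul_one_div, div_self hp0.ne', ENNReal.rpow_one]

/-- for `1 ≤ p < ∞` and reals `α, c ≥ 1`,
`π_{p,1}^{⌊cα⌋}(T) ≤ (4c)^{1/p} π_{p,1}^{⌊α⌋}(T)`. -/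
theorem statement11 (p : ℝ) (hp1 : 1 ≤ p) (α c : ℝ) (hα : 1 ≤ α) (hc : 1 ≤ c)
    (X Y : Type*) [NormedAddCommGroup X] [NormedSpace ℝ X] [CompleteSpace X]
    [NormedAddCommGroup Y] [NormedSpace ℝ Y] [CompleteSpace Y]
    (T : X →L[ℝ] Y) :
    piN (ENNReal.ofReal p) 1 (⌊c * α⌋₊) T ≤
      ENNReal.ofReal ((4 * c) ^ (1 / p)) * piN (ENNReal.ofReal p) 1 (⌊α⌋₊) T := by
  have hp0 : 0 < p := by linarith
  set N : ℕ := ⌊α⌋₊ with hN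
  set m : ℕ := ⌈2 * c⌉₊ with hm
  have hN1 : 1 ≤ N := Nat.le_floor (by exact_mod_cast hα)
  have hα2N : α ≤ 2 * (N : ℝ) := by
    have h1 := Nat.lt_floor_add_one α
    have h2 : (1 : ℝ) ≤ (N : ℝ) := by exact_mod_cast hN1
    linarith
  have h2cm : 2 * c ≤ (m : ℝ) := Nat.le_ceil _
  have hle : ⌊c * α⌋₊ ≤ m * N := by
    have h1 : (⌊c * α⌋₊ : ℝ) ≤ c * α := Nat.floor_le (by positivity)
    have h2 : c * α ≤ (m : ℝ) * (N : ℝ) := by nlinarith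
    have : (⌊c * α⌋₊ : ℝ) ≤ ((m * N : ℕ) : ℝ) := by push_cast; linarith
    exact_mod_cast this
  have hm4c : (m : ℝ) ≤ 4 * c := by
    have := Nat.ceil_lt_add_one (by positivity : (0 : ℝ) ≤ 2 * c)
    linarith
  calc piN (ENNReal.ofReal p) 1 (⌊c * α⌋₊) T
      ≤ piN (ENNReal.ofReal p) 1 (m * N) T := piN_mono p hp1 hle T
    _ ≤ (m : ℝ≥0∞) ^ (1 / p) * piN (ENNReal.ofReal p) 1 N T := piN_block p hp1 m N T
    _ ≤ ENNReal.ofReal ((4 * c) ^ (1 / p)) * piN (ENNReal.ofReal p) 1 N T := by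
        apply mul_le_mul_left
        rw [← ENNReal.ofReal_rpow_of_pos (by linarith : (0 : ℝ) < 4 * c)]
        refine ENNReal.rpow_le_rpow ?_ (by positivity)
        rw [← ENNReal.ofReal_natCast]
        exact ENNReal.ofReal_le_ofReal hm4c


end
end

section
/- Let 0 < θ < 1, let 1 ≤ q ≤ 2 and 1 ≤ r ≤ 2 with 1/r = (1−θ)/q + θ/2, and let p ≥ q be defined by 1/p = 1/q − θ/2. Then for every n ∈ ℕ the canonical identity map ι : ℓ_{q'}^n → ℓ_r^n (where q' is the conjugate exponent of q) satisfies π_{p,q}(ι) ≤ n^{1/p}. -/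
open scoped ENNReal NNReal BigOperators

noncomputable section

open Finset




/-- Two-weight Hölder: `∑ A^λ B^(1-λ) ≤ (∑A)^λ (∑B)^(1-λ)`. -/
lemma hoelder_lam {ι : Type*} (s : Finset ι) (A B : ι → ℝ)
    (hA : ∀ i ∈ s, 0 ≤ A i) (hB : ∀ i ∈ s, 0 ≤ B i)
    {lam : ℝ} (h0 : 0 ≤ lam) (h1 : lam ≤ 1) :
    ∑ i ∈ s, (A i) ^ lam * (B i) ^ (1 - lam) ≤
      (∑ i ∈ s, A i) ^ lam * (∑ i ∈ s, B i) ^ (1 - lam) := by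
  rcases eq_or_lt_of_le h0 with h0' | h0'
  · simp [← h0']
  rcases eq_or_lt_of_le h1 with h1' | h1'
  · simp [h1']
  have hpq : Real.HolderConjugate (1/lam) (1/(1-lam)) := by
    refine Real.holderConjugate_iff.mpr ⟨?_, ?_⟩
    · rw [lt_div_iff₀ h0']; linarith
    · simp only [one_div, inv_inv]; ring
  have H := Real.inner_le_Lp_mul_Lq_of_nonneg s (f := fun i => (A i) ^ lam)
      (g := fun i => (B i) ^ (1 - lam)) hpq
      (fun i hi => Real.rpow_nonneg (hA i hi) _)
      (fun i hi => Real.rpow_nonneg (hB i hi) _)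
  have e1 : ∀ i ∈ s, ((A i) ^ lam) ^ (1/lam) = A i := fun i hi => by
    rw [← Real.rpow_mul (hA i hi), mul_one_div_cancel h0'.ne', Real.rpow_one]
  have e2 : ∀ i ∈ s, ((B i) ^ (1-lam)) ^ (1/(1-lam)) = B i := fun i hi => by
    rw [← Real.rpow_mul (hB i hi), mul_one_div_cancel (by linarith : (1:ℝ) - lam ≠ 0),
      Real.rpow_one]
  rw [Finset.sum_congr rfl e1, Finset.sum_congr rfl e2, one_div_one_div, one_div_one_div] at H
  exact H

/-- Power mean inequality `((∑ Z)/M)^t ≤ (∑ Z^t)/M` for `t ≥ 1`. -/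
lemma pow_mean_le {ι : Type*} [Fintype ι] [Nonempty ι] (Z : ι → ℝ) (hZ : ∀ i, 0 ≤ Z i)
    {t : ℝ} (ht : 1 ≤ t) :
    ((∑ i, Z i) / (Fintype.card ι)) ^ t ≤ (∑ i, (Z i) ^ t) / (Fintype.card ι) := by
  have hcard : (0:ℝ) < (Fintype.card ι) := by
    have := Fintype.card_pos (α := ι); positivity
  have H := Real.rpow_arith_mean_le_arith_mean_rpow Finset.univ
      (fun _ => 1 / (Fintype.card ι : ℝ)) Z (fun i _ => by positivity)
      (by rw [Finset.sum_const, Finset.card_univ, nsmul_eq_mul]; field_simp)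
      (fun i _ => hZ i) ht
  calc ((∑ i, Z i) / (Fintype.card ι)) ^ t
      = (∑ i, 1 / (Fintype.card ι : ℝ) * Z i) ^ t := by
        rw [← Finset.mul_sum]; ring_nf
    _ ≤ ∑ i, 1 / (Fintype.card ι : ℝ) * (Z i) ^ t := H
    _ = (∑ i, (Z i) ^ t) / (Fintype.card ι) := by rw [← Finset.mul_sum]; ring

/-- Orthogonality of random signs. -/
lemma sign_orth {m : ℕ} (t : Fin m → ℝ) :
    ∑ ε : Fin m → Bool, (∑ k, (if ε k then (1:ℝ) else -1) * t k) ^ 2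
      = 2 ^ m * ∑ k, (t k) ^ 2 := by
  classical
  have key : ∀ k l : Fin m, ∑ ε : Fin m → Bool,
      ((if ε k then (1:ℝ) else -1) * (if ε l then (1:ℝ) else -1))
      = if k = l then (2:ℝ) ^ m else 0 := by
    intro k l
    by_cases hkl : k = l
    · subst hkl
      simp only [if_pos rfl]
      have : ∀ ε : Fin m → Bool, ((if ε k then (1:ℝ) else -1) * (if ε k then (1:ℝ) else -1)) = 1 := by
        intro ε; by_cases h : ε k <;> simp [h]
      rw [Finset.sum_congr rfl fun ε _ => this ε, Finset.sum_const, Finset.card_univ]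
      simp [Fintype.card_fun]
    · rw [if_neg hkl]
      refine Finset.sum_ninvolution (fun ε => Function.update ε k (!ε k)) ?_ ?_ (fun _ => Finset.mem_univ _) ?_
      · intro ε
        rw [Function.update_self, Function.update_of_ne (Ne.symm hkl)]
        by_cases h : ε k <;> by_cases h' : ε l <;> simp [h, h'] <;> ring
      · intro ε _ hcon
        have h3 := congrFun hcon k
        rw [Function.update_self] at h3
        exact (Bool.not_ne_self (ε k)) h3
      · intro ε
        funext j
        by_cases hj : j = k
        · subst hj; simp
        · simp [Function.update_of_ne hj]
  calc ∑ ε : Fin m → Bool, (∑ k, (if ε k then (1:ℝ) else -1) * t k) ^ 2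
      = ∑ ε : Fin m → Bool, ∑ k, ∑ l,
          ((if ε k then (1:ℝ) else -1) * (if ε l then (1:ℝ) else -1)) * (t k * t l) := by
        refine Finset.sum_congr rfl fun ε _ => ?_
        rw [sq, Finset.sum_mul_sum]
        refine Finset.sum_congr rfl fun k _ => Finset.sum_congr rfl fun l _ => by ring
    _ = ∑ k, ∑ l, (∑ ε : Fin m → Bool,
          ((if ε k then (1:ℝ) else -1) * (if ε l then (1:ℝ) else -1))) * (t k * t l) := by
        rw [Finset.sum_comm]
        refine Finset.sum_congr rfl fun k _ => ?_
        rw [Finset.sum_comm]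
        refine Finset.sum_congr rfl fun l _ => ?_
        rw [Finset.sum_mul]
    _ = ∑ k, ∑ l, (if k = l then (2:ℝ)^m else 0) * (t k * t l) := by
        refine Finset.sum_congr rfl fun k _ => Finset.sum_congr rfl fun l _ => by rw [key]
    _ = 2 ^ m * ∑ k, (t k) ^ 2 := by
        rw [Finset.mul_sum]
        refine Finset.sum_congr rfl fun k _ => ?_
        rw [Finset.sum_eq_single k (fun l _ hl => by rw [if_neg (Ne.symm hl), zero_mul])
          (fun h => absurd (Finset.mem_univ k) h)]
        rw [if_pos rfl]; ring


lemma sq_eq_rpow_abs (x : ℝ) : x ^ (2:ℕ) = |x| ^ (2:ℝ) := by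
  have h : ((2:ℕ):ℝ) = (2:ℝ) := by norm_num
  rw [← h, Real.rpow_natCast, sq_abs]

lemma core_B {q : ℝ} (hq1 : 1 < q) (hq2 : q < 2) {m n : ℕ} (g : Fin m → Fin n → ℝ)
    (hW : ∀ a : Fin n → ℝ, (∑ i, |a i| ^ q) ≤ 1 → ∑ k, |∑ i, a i * g k i| ^ q ≤ 1) :
    ∑ k, (∑ i, |g k i| ^ (2:ℝ)) ^ (q/(2-q)) ≤ n := by
  have hq0 : (0:ℝ) < q := by linarith
  set qc : ℝ := q/(q-1) with hqc
  have hq1' : (0:ℝ) < q - 1 := by linarith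
  have h2q : (0:ℝ) < 2 - q := by linarith
  have hqc2 : 2 < qc := by rw [hqc, lt_div_iff₀ hq1']; linarith
  have hqc0 : (0:ℝ) < qc := by linarith
  have hconj : 1/q + 1/qc = 1 := by
    rw [hqc, one_div_div]; field_simp; ring
  have hqinv : 1 - 1/q = 1/qc := by linarith
  have hqcinv : 1 - 1/qc = 1/q := by linarith
  set e : ℝ := q/(2-q) with he
  have he1 : 1 < e := by rw [he, lt_div_iff₀ h2q]; linarith
  have he0 : (0:ℝ) < e := by linarith
  have hid1 : ((e - 1)/2) * qc = e := by
    rw [he, hqc]; field_simp <;> ring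
  have hid2 : (qc - 1) * q = qc := by
    rw [hqc]; field_simp <;> ring
  set c : Fin m → ℝ := fun k => ∑ i, |g k i| ^ (2:ℝ) with hc
  have hck : ∀ k, c k = ∑ i, |g k i| ^ (2:ℝ) := fun _ => rfl
  have hcnn : ∀ k, 0 ≤ c k := fun k => Finset.sum_nonneg fun i _ => Real.rpow_nonneg (abs_nonneg _) _
  set S : ℝ := ∑ k, (c k) ^ e with hS
  have hSnn : 0 ≤ S := Finset.sum_nonneg fun k _ => Real.rpow_nonneg (hcnn k) _
  set u : Fin m → ℝ := fun k => (c k) ^ ((e-1)/2) with hu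
  have hunn : ∀ k, 0 ≤ u k := fun k => Real.rpow_nonneg (hcnn k) _
  have huqc : ∀ k, (u k) ^ qc = (c k) ^ e := by
    intro k
    rw [hu]
    dsimp only
    rw [← Real.rpow_mul (hcnn k), hid1]
  have hu2 : ∀ k, (u k) ^ (2:ℕ) = (c k) ^ (e-1) := by
    intro k
    rw [hu]
    dsimp only
    rw [← Real.rpow_natCast ((c k) ^ ((e-1)/2)) 2, ← Real.rpow_mul (hcnn k)]
    norm_num
  have hSu : S = ∑ k, (u k) ^ qc := by
    rw [hS]; exact (Finset.sum_congr rfl fun k _ => (huqc k).symm)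
  set V : Fin n → ℝ := fun i => ∑ k, (u k * g k i) ^ (2:ℕ) with hV
  have hVi : ∀ i, V i = ∑ k, (u k * g k i) ^ (2:ℕ) := fun _ => rfl
  have hVnn : ∀ i, 0 ≤ V i := fun i => Finset.sum_nonneg fun k _ => by positivity
  have hce : ∀ k, (c k) ^ e = (c k) ^ (e-1) * c k := by
    intro k
    have h' : (c k) ^ ((e-1)+1) = (c k) ^ (e-1) * (c k) ^ (1:ℝ) :=
      Real.rpow_add' (hcnn k) (by linarith)
    rw [sub_add_cancel, Real.rpow_one] at h'
    exact h'
  have hcVk : ∀ k, (c k) ^ e = ∑ i, (u k * g k i) ^ (2:ℕ) := by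
    intro k
    calc (c k) ^ e = (c k) ^ (e-1) * c k := hce k
      _ = ∑ i, (c k) ^ (e-1) * |g k i| ^ (2:ℝ) := by rw [← Finset.mul_sum, ← hck]
      _ = ∑ i, (u k * g k i) ^ (2:ℕ) := by
          refine Finset.sum_congr rfl fun i _ => ?_
          rw [mul_pow, hu2, sq_eq_rpow_abs]
  have hSV : S = ∑ i, V i := by
    rw [hS]
    calc ∑ k, (c k) ^ e = ∑ k, ∑ i, (u k * g k i) ^ (2:ℕ) :=
          Finset.sum_congr rfl fun k _ => hcVk k
      _ = ∑ i, ∑ k, (u k * g k i) ^ (2:ℕ) := Finset.sum_comm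
      _ = ∑ i, V i := Finset.sum_congr rfl fun i _ => (hVi i).symm
  -- Step 4
  have step4 : ∀ ε : Fin m → Bool,
      (∑ i, |∑ k, (if ε k then (1:ℝ) else -1) * (u k * g k i)| ^ qc) ≤ S := by
    intro ε
    set Y : Fin n → ℝ := fun i => ∑ k, (if ε k then (1:ℝ) else -1) * (u k * g k i) with hY
    set T : ℝ := ∑ i, |Y i| ^ qc with hT
    have hTnn : 0 ≤ T := Finset.sum_nonneg fun i _ => Real.rpow_nonneg (abs_nonneg _) _
    rcases eq_or_lt_of_le hTnn with hT0 | hT0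
    · exact le_trans (le_of_eq hT0.symm) hSnn
    set a : Fin n → ℝ := fun i => (Y i) * |Y i| ^ (qc - 2) / T ^ (1/q) with ha
    have hTq : 0 < T ^ (1/q) := Real.rpow_pos_of_pos hT0 _
    have haabs : ∀ i, |a i| = |Y i| ^ (qc - 1) / T ^ (1/q) := by
      intro i
      rw [ha]
      dsimp only
      rw [abs_div, abs_mul, abs_of_pos hTq, Real.abs_rpow_of_nonneg (abs_nonneg _), abs_abs]
      congr 1
      nth_rewrite 1 [← Real.rpow_one |Y i|]
      rw [← Real.rpow_add' (abs_nonneg _) (by linarith : (1:ℝ) + (qc - 2) ≠ 0)]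
      congr 1; ring
    have hanorm : (∑ i, |a i| ^ q) ≤ 1 := by
      have hpt : ∀ i, |a i| ^ q = |Y i| ^ qc / T := by
        intro i
        rw [haabs i, Real.div_rpow (Real.rpow_nonneg (abs_nonneg _) _) (le_of_lt hTq)]
        congr 1
        · rw [← Real.rpow_mul (abs_nonneg _), hid2]
        · rw [← Real.rpow_mul (le_of_lt hT0), one_div_mul_cancel (ne_of_gt hq0), Real.rpow_one]
      rw [Finset.sum_congr rfl fun i _ => hpt i, ← Finset.sum_div, ← hT,
        div_self (ne_of_gt hT0)]
    have hG := hW a hanorm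
    have hGnn : (0:ℝ) ≤ ∑ k, |∑ i, a i * g k i| ^ q :=
      Finset.sum_nonneg fun k _ => Real.rpow_nonneg (abs_nonneg _) _
    -- key identity two ways
    have hkey1 : ∑ i, a i * Y i = T ^ (1 - 1/q) := by
      have hpt : ∀ i, a i * Y i = |Y i| ^ qc / T ^ (1/q) := by
        intro i
        rw [ha]
        dsimp only
        rw [div_mul_eq_mul_div]
        congr 1
        calc Y i * |Y i| ^ (qc-2) * Y i = (Y i)^(2:ℕ) * |Y i| ^ (qc-2) := by ring
          _ = |Y i| ^ (2:ℝ) * |Y i| ^ (qc-2) := by rw [sq_eq_rpow_abs]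
          _ = |Y i| ^ qc := by
              rw [← Real.rpow_add' (abs_nonneg _) (by linarith : (2:ℝ) + (qc-2) ≠ 0)]
              congr 1; ring
      rw [Finset.sum_congr rfl fun i _ => hpt i, ← Finset.sum_div, ← hT]
      rw [Real.rpow_sub hT0, Real.rpow_one]
    have hYi : ∀ i, Y i = ∑ k, (if ε k then (1:ℝ) else -1) * (u k * g k i) := fun _ => rfl
    have hkey2 : ∑ i, a i * Y i
        = ∑ k, (if ε k then (1:ℝ) else -1) * u k * (∑ i, a i * g k i) := by
      calc ∑ i, a i * Y i
          = ∑ i, ∑ k, a i * ((if ε k then (1:ℝ) else -1) * (u k * g k i)) := by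
            refine Finset.sum_congr rfl fun i _ => ?_
            rw [hYi i, Finset.mul_sum]
        _ = ∑ k, ∑ i, a i * ((if ε k then (1:ℝ) else -1) * (u k * g k i)) := Finset.sum_comm
        _ = ∑ k, (if ε k then (1:ℝ) else -1) * u k * (∑ i, a i * g k i) := by
            refine Finset.sum_congr rfl fun k _ => ?_
            rw [Finset.mul_sum]
            refine Finset.sum_congr rfl fun i _ => by ring
    -- bound the bilinear form
    have hb : ∑ k, (if ε k then (1:ℝ) else -1) * u k * (∑ i, a i * g k i)
        ≤ S ^ (1/qc) := by
      have h1 : ∑ k, (if ε k then (1:ℝ) else -1) * u k * (∑ i, a i * g k i)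
          ≤ ∑ k, u k * |∑ i, a i * g k i| := by
        refine Finset.sum_le_sum fun k _ => ?_
        calc (if ε k then (1:ℝ) else -1) * u k * (∑ i, a i * g k i)
            ≤ |(if ε k then (1:ℝ) else -1) * u k * (∑ i, a i * g k i)| := le_abs_self _
          _ = u k * |∑ i, a i * g k i| := by
              rw [abs_mul, abs_mul, abs_of_nonneg (hunn k)]
              by_cases hek : ε k <;> simp [hek]
      have h2 : ∑ k, u k * |∑ i, a i * g k i|
          ≤ (∑ k, (u k) ^ qc) ^ (1/qc) * (∑ k, |∑ i, a i * g k i| ^ q) ^ (1 - 1/qc) := by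
        have H := hoelder_lam Finset.univ (fun k => (u k) ^ qc)
          (fun k => |∑ i, a i * g k i| ^ q)
          (fun k _ => Real.rpow_nonneg (hunn k) _)
          (fun k _ => Real.rpow_nonneg (abs_nonneg _) _)
          (lam := 1/qc) (by positivity) (by rw [div_le_one hqc0]; linarith)
        calc ∑ k, u k * |∑ i, a i * g k i|
            = ∑ k, ((u k) ^ qc) ^ (1/qc) * (|∑ i, a i * g k i| ^ q) ^ (1 - 1/qc) := by
              refine Finset.sum_congr rfl fun k _ => ?_
              rw [hqcinv, ← Real.rpow_mul (hunn k), ← Real.rpow_mul (abs_nonneg _),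
                mul_one_div_cancel (ne_of_gt hqc0), mul_one_div_cancel (ne_of_gt hq0),
                Real.rpow_one, Real.rpow_one]
          _ ≤ _ := H
      have h3 : (∑ k, |∑ i, a i * g k i| ^ q) ^ (1 - 1/qc) ≤ 1 :=
        Real.rpow_le_one hGnn hG (by rw [hqcinv]; positivity)
      calc ∑ k, (if ε k then (1:ℝ) else -1) * u k * (∑ i, a i * g k i)
          ≤ (∑ k, (u k) ^ qc) ^ (1/qc) * (∑ k, |∑ i, a i * g k i| ^ q) ^ (1 - 1/qc) :=
            le_trans h1 h2
        _ ≤ (∑ k, (u k) ^ qc) ^ (1/qc) * 1 := by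
            refine mul_le_mul_of_nonneg_left h3 (Real.rpow_nonneg ?_ _)
            exact Finset.sum_nonneg fun k _ => Real.rpow_nonneg (hunn k) _
        _ = S ^ (1/qc) := by rw [mul_one, ← hSu]
    have hTS : T ^ (1/qc) ≤ S ^ (1/qc) := by
      have h := hb
      rw [← hkey2, hkey1, hqinv] at h
      exact h
    calc T = (T ^ (1/qc)) ^ qc := by
          rw [← Real.rpow_mul hTnn, one_div_mul_cancel (ne_of_gt hqc0), Real.rpow_one]
      _ ≤ (S ^ (1/qc)) ^ qc :=
          Real.rpow_le_rpow (Real.rpow_nonneg hTnn _) hTS (le_of_lt hqc0)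
      _ = S := by
          rw [← Real.rpow_mul hSnn, one_div_mul_cancel (ne_of_gt hqc0), Real.rpow_one]
  -- Steps 2,3,5
  have hcard : ((Fintype.card (Fin m → Bool) : ℕ) : ℝ) = 2 ^ m := by
    simp [Fintype.card_fun]
  have sum23 : ∑ i, (V i) ^ (qc/2) ≤ S := by
    have step3 : ∀ i, (V i) ^ (qc/2)
        ≤ (∑ ε : Fin m → Bool, |∑ k, (if ε k then (1:ℝ) else -1) * (u k * g k i)| ^ qc) / 2 ^ m := by
      intro i
      have horth := sign_orth (fun k => u k * g k i)
      have hVeq : V i = (∑ ε : Fin m → Bool,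
          (∑ k, (if ε k then (1:ℝ) else -1) * (u k * g k i)) ^ (2:ℕ)) / 2 ^ m := by
        rw [horth, hVi i]
        field_simp
      have hpm := pow_mean_le (ι := Fin m → Bool)
        (fun ε => (∑ k, (if ε k then (1:ℝ) else -1) * (u k * g k i)) ^ (2:ℕ))
        (fun ε => by positivity) (t := qc/2) (by linarith)
      rw [hcard] at hpm
      calc (V i) ^ (qc/2)
          ≤ (∑ ε : Fin m → Bool,
              ((∑ k, (if ε k then (1:ℝ) else -1) * (u k * g k i)) ^ (2:ℕ)) ^ (qc/2)) / 2 ^ m := by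
            rw [hVeq]; exact hpm
        _ = (∑ ε : Fin m → Bool,
              |∑ k, (if ε k then (1:ℝ) else -1) * (u k * g k i)| ^ qc) / 2 ^ m := by
            congr 1
            refine Finset.sum_congr rfl fun ε _ => ?_
            rw [sq_eq_rpow_abs, ← Real.rpow_mul (abs_nonneg _)]
            congr 1; ring
    calc ∑ i, (V i) ^ (qc/2)
        ≤ ∑ i, (∑ ε : Fin m → Bool,
            |∑ k, (if ε k then (1:ℝ) else -1) * (u k * g k i)| ^ qc) / 2 ^ m :=
          Finset.sum_le_sum fun i _ => step3 i
      _ = (∑ ε : Fin m → Bool, ∑ i,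
            |∑ k, (if ε k then (1:ℝ) else -1) * (u k * g k i)| ^ qc) / 2 ^ m := by
          rw [← Finset.sum_div, Finset.sum_comm]
      _ ≤ (∑ _ε : Fin m → Bool, S) / 2 ^ m := by
          gcongr with ε _
          exact step4 ε
      _ = S := by
          rw [Finset.sum_const, Finset.card_univ, nsmul_eq_mul, hcard]
          field_simp
  have step2 : S ≤ (n:ℝ) ^ (1 - 2/qc) * (∑ i, (V i) ^ (qc/2)) ^ (2/qc) := by
    have hlam1 : (0:ℝ) ≤ 1 - 2/qc := by
      rw [sub_nonneg, div_le_one hqc0]; linarith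
    have hlam2 : (1:ℝ) - 2/qc ≤ 1 := by
      rw [sub_le_self_iff]; positivity
    have H := hoelder_lam Finset.univ (fun _ : Fin n => (1:ℝ)) (fun i => (V i) ^ (qc/2))
      (fun _ _ => zero_le_one) (fun i _ => Real.rpow_nonneg (hVnn i) _)
      (lam := 1 - 2/qc) hlam1 hlam2
    calc S = ∑ i, V i := hSV
      _ = ∑ i, (1:ℝ) ^ (1 - 2/qc) * ((V i ^ (qc/2)) ^ (1 - (1 - 2/qc))) := by
          refine Finset.sum_congr rfl fun i _ => ?_
          rw [Real.one_rpow, one_mul]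
          have h1 : (1:ℝ) - (1 - 2/qc) = 2/qc := by ring
          have h2 : qc/2 * (2/qc) = 1 := by field_simp
          rw [h1, ← Real.rpow_mul (hVnn i), h2, Real.rpow_one]
      _ ≤ (∑ _i : Fin n, (1:ℝ)) ^ (1 - 2/qc) *
            (∑ i, (V i) ^ (qc/2)) ^ (1 - (1 - 2/qc)) := H
      _ = (n:ℝ) ^ (1 - 2/qc) * (∑ i, (V i) ^ (qc/2)) ^ (2/qc) := by
          rw [Finset.sum_const, Finset.card_univ, Fintype.card_fin, nsmul_eq_mul, mul_one]
          congr 2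
          ring
  have hVSnn : (0:ℝ) ≤ ∑ i, (V i) ^ (qc/2) :=
    Finset.sum_nonneg fun i _ => Real.rpow_nonneg (hVnn i) _
  have hfin : S ≤ (n:ℝ) ^ (1 - 2/qc) * S ^ (2/qc) := by
    refine le_trans step2 (mul_le_mul_of_nonneg_left ?_ (Real.rpow_nonneg (Nat.cast_nonneg n) _))
    exact Real.rpow_le_rpow hVSnn sum23 (by positivity)
  rcases eq_or_lt_of_le hSnn with hS0 | hS0
  · exact le_trans (le_of_eq hS0.symm) (Nat.cast_nonneg n)
  have hlam0 : (0:ℝ) < 1 - 2/qc := by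
    rw [sub_pos, div_lt_one hqc0]; exact hqc2
  have hSsplit : S ^ (1 - 2/qc) * S ^ (2/qc) = S := by
    rw [← Real.rpow_add hS0]; norm_num
  have hmul : S ^ (1 - 2/qc) * S ^ (2/qc) ≤ (n:ℝ) ^ (1 - 2/qc) * S ^ (2/qc) := by
    rw [hSsplit]; exact hfin
  have hSexp : S ^ (1 - 2/qc) ≤ (n:ℝ) ^ (1 - 2/qc) :=
    le_of_mul_le_mul_right hmul (Real.rpow_pos_of_pos hS0 _)
  calc S = (S ^ (1 - 2/qc)) ^ (1/(1 - 2/qc)) := by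
        rw [← Real.rpow_mul hSnn, mul_one_div_cancel (ne_of_gt hlam0), Real.rpow_one]
    _ ≤ ((n:ℝ) ^ (1 - 2/qc)) ^ (1/(1 - 2/qc)) :=
        Real.rpow_le_rpow (Real.rpow_nonneg hSnn _) hSexp (by positivity)
    _ = (n:ℝ) := by
        rw [← Real.rpow_mul (Nat.cast_nonneg n), mul_one_div_cancel (ne_of_gt hlam0),
          Real.rpow_one]


lemma real_main {θ q r p : ℝ} (hθ0 : 0 < θ) (hθ1 : θ < 1) (hq1 : 1 ≤ q) (hq2 : q ≤ 2)
    (hr1 : 1 ≤ r) (hrθ : 1/r = (1-θ)/q + θ/2) (hpθ : 1/p = 1/q - θ/2) (hqp : q ≤ p)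
    {m n : ℕ} (g : Fin m → Fin n → ℝ)
    (hW : ∀ a : Fin n → ℝ, (∑ i, |a i| ^ q) ≤ 1 → ∑ k, |∑ i, a i * g k i| ^ q ≤ 1) :
    ∑ k, (∑ i, |g k i| ^ r) ^ (p/r) ≤ n := by
  have hq0 : (0:ℝ) < q := by linarith
  have hr0 : (0:ℝ) < r := by linarith
  have hp0 : (0:ℝ) < p := by
    have h12 : (1:ℝ)/2 ≤ 1/q := one_div_le_one_div_of_le hq0 hq2
    have h13 : 0 < 1/p := by rw [hpθ]; linarith
    exact one_div_pos.mp h13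
  have hp1 : (1:ℝ) ≤ p := le_trans hq1 hqp
  -- columns
  have hcol : ∀ i, ∑ k, |g k i| ^ q ≤ 1 := by
    intro i
    have ha : (∑ j, |(Pi.single i (1:ℝ) : Fin n → ℝ) j| ^ q) ≤ 1 := by
      rw [Finset.sum_eq_single i]
      · simp
      · intro j _ hj
        rw [Pi.single_eq_of_ne hj, abs_zero, Real.zero_rpow (ne_of_gt hq0)]
      · intro h; exact absurd (Finset.mem_univ i) h
    have h2 := hW _ ha
    have h3 : ∀ k, (∑ j, (Pi.single i (1:ℝ) : Fin n → ℝ) j * g k j) = g k i := by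
      intro k
      rw [Finset.sum_eq_single i]
      · simp
      · intro j _ hj
        rw [Pi.single_eq_of_ne hj, zero_mul]
      · intro h; exact absurd (Finset.mem_univ i) h
    calc ∑ k, |g k i| ^ q = ∑ k, |∑ j, (Pi.single i (1:ℝ) : Fin n → ℝ) j * g k j| ^ q := by
          refine Finset.sum_congr rfl fun k _ => ?_
          rw [h3 k]
      _ ≤ 1 := h2
  have hbd : ∀ k i, |g k i| ≤ 1 := by
    intro k i
    by_contra hcon
    push_neg at hcon
    have h1 : (1:ℝ) < |g k i| ^ q := by
      calc (1:ℝ) = 1 ^ q := (Real.one_rpow q).symm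
        _ < |g k i| ^ q := Real.rpow_lt_rpow (by norm_num) hcon hq0
    have h2 : |g k i| ^ q ≤ ∑ k', |g k' i| ^ q :=
      Finset.single_le_sum (f := fun k' => |g k' i| ^ q)
        (fun k' _ => Real.rpow_nonneg (abs_nonneg _) _) (Finset.mem_univ k)
    linarith [hcol i]
  have hA : ∑ k, ∑ i, |g k i| ^ q ≤ (n:ℝ) := by
    rw [Finset.sum_comm]
    calc ∑ i, ∑ k, |g k i| ^ q ≤ ∑ _i : Fin n, (1:ℝ) :=
          Finset.sum_le_sum fun i _ => hcol i
      _ = n := by rw [Finset.sum_const, Finset.card_univ, Fintype.card_fin, nsmul_eq_mul, mul_one]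
  rcases eq_or_lt_of_le hq2 with hq2e | hq2s
  · -- case q = 2 (then r = 2)
    have hre : r = 2 := by
      have h1 : 1/r = 1/2 := by rw [hrθ, hq2e]; ring
      field_simp at h1
      linarith
    subst hq2e
    subst hre
    have hsup : ∀ k, (∑ i, |g k i| ^ (2:ℝ)) ≤ 1 := by
      intro k
      set ck := ∑ i, |g k i| ^ (2:ℝ) with hck
      have hcknn : 0 ≤ ck := Finset.sum_nonneg fun i _ => Real.rpow_nonneg (abs_nonneg _) _
      rcases eq_or_lt_of_le hcknn with h0 | h0
      · rw [← h0]; norm_num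
      set s := ck ^ ((1:ℝ)/2) with hs
      have hs0 : 0 < s := Real.rpow_pos_of_pos h0 _
      have hs2 : s ^ (2:ℝ) = ck := by
        rw [hs, ← Real.rpow_mul hcknn]
        norm_num
      have ha : (∑ i, |g k i / s| ^ (2:ℝ)) ≤ 1 := by
        have hterm : ∀ i, |g k i / s| ^ (2:ℝ) = |g k i| ^ (2:ℝ) / s ^ (2:ℝ) := by
          intro i
          rw [abs_div, abs_of_pos hs0, Real.div_rpow (abs_nonneg _) (le_of_lt hs0)]
        calc (∑ i, |g k i / s| ^ (2:ℝ)) = ∑ i, |g k i| ^ (2:ℝ) / s ^ (2:ℝ) :=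
              Finset.sum_congr rfl fun i _ => hterm i
          _ = ck / s ^ (2:ℝ) := by rw [← Finset.sum_div, ← hck]
          _ = 1 := by rw [hs2, div_self (ne_of_gt h0)]
          _ ≤ 1 := le_refl _
      have h2 := hW (fun j => g k j / s) ha
      have h3 : (∑ i, (g k i / s) * g k i) = ck / s := by
        calc ∑ i, (g k i / s) * g k i = ∑ i, |g k i| ^ (2:ℝ) / s := by
              refine Finset.sum_congr rfl fun i _ => ?_
              rw [div_mul_eq_mul_div]
              congr 1
              rw [← sq_eq_rpow_abs, pow_two]
          _ = ck / s := by rw [← Finset.sum_div]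
      have h4 : |∑ i, (g k i / s) * g k i| ^ (2:ℝ) = ck := by
        rw [h3, abs_of_nonneg (div_nonneg hcknn (le_of_lt hs0)),
          Real.div_rpow hcknn (le_of_lt hs0), hs2]
        have h5 : ck ^ (2:ℝ) = ck * ck := by
          rw [show (2:ℝ) = ((2:ℕ):ℝ) by norm_num, Real.rpow_natCast, pow_two]
        rw [h5, mul_div_assoc, div_self (ne_of_gt h0), mul_one]
      calc ck = |∑ i, (g k i / s) * g k i| ^ (2:ℝ) := h4.symm
        _ ≤ ∑ k', |∑ i, (g k i / s) * g k' i| ^ (2:ℝ) :=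
            Finset.single_le_sum (f := fun k' => |∑ i, (g k i / s) * g k' i| ^ (2:ℝ))
              (fun k' _ => Real.rpow_nonneg (abs_nonneg _) _) (Finset.mem_univ k)
        _ ≤ 1 := h2
    calc ∑ k, (∑ i, |g k i| ^ (2:ℝ)) ^ (p/2)
        ≤ ∑ k, ∑ i, |g k i| ^ (2:ℝ) := by
          refine Finset.sum_le_sum fun k _ => ?_
          have hcknn : (0:ℝ) ≤ ∑ i, |g k i| ^ (2:ℝ) :=
            Finset.sum_nonneg fun i _ => Real.rpow_nonneg (abs_nonneg _) _
          rcases eq_or_lt_of_le hcknn with h0 | h0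
          · rw [← h0, Real.zero_rpow (by positivity : p/2 ≠ 0)]
          · calc (∑ i, |g k i| ^ (2:ℝ)) ^ (p/2)
                ≤ (∑ i, |g k i| ^ (2:ℝ)) ^ (1:ℝ) :=
                  Real.rpow_le_rpow_of_exponent_ge h0 (hsup k)
                    (by rw [le_div_iff₀ (by norm_num : (0:ℝ) < 2)]; linarith)
              _ = ∑ i, |g k i| ^ (2:ℝ) := Real.rpow_one _
      _ ≤ n := hA
  · -- case q < 2
    have hmono : ∀ x s t : ℝ, 0 ≤ x → x ≤ 1 → 0 < s → s ≤ t → x ^ t ≤ x ^ s := by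
      intro x s t hx hx1 hs hst
      rcases eq_or_lt_of_le hx with h0 | h0
      · rw [← h0, Real.zero_rpow (ne_of_gt (lt_of_lt_of_le hs hst)), Real.zero_rpow (ne_of_gt hs)]
      · exact Real.rpow_le_rpow_of_exponent_ge h0 hx1 hst
    have hB : ∑ k, (∑ i, |g k i| ^ (2:ℝ)) ^ (q/(2-q)) ≤ (n:ℝ) := by
      rcases eq_or_lt_of_le hq1 with hq1e | hq1s
      · -- q = 1
        have hqe : q = 1 := hq1e.symm
        subst hqe
        have hexp1 : (1:ℝ)/(2-1) = 1 := by norm_num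
        calc ∑ k, (∑ i, |g k i| ^ (2:ℝ)) ^ ((1:ℝ)/(2-1))
            = ∑ k, (∑ i, |g k i| ^ (2:ℝ)) := by
              refine Finset.sum_congr rfl fun k _ => ?_
              rw [hexp1, Real.rpow_one]
          _ ≤ ∑ k, ∑ i, |g k i| ^ (1:ℝ) := by
              refine Finset.sum_le_sum fun k _ => Finset.sum_le_sum fun i _ => ?_
              exact hmono _ _ _ (abs_nonneg _) (hbd k i) one_pos (by norm_num)
          _ ≤ n := hA
      · exact core_B hq1s hq2s g hW
    -- exponent bookkeeping
    have h2q : (0:ℝ) < 2 - q := by linarith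
    have hrP : 2*q = 2*(1-θ)*r + θ*q*r := by
      have h := hrθ
      field_simp at h
      linarith
    have hpP : 2*q = 2*p - θ*p*q := by
      have h := hpθ
      field_simp at h
      linarith
    set e1 : ℝ := (1-θ)*p/q with he1d
    set e2 : ℝ := θ*p*(2-q)/(2*q) with he2d
    set lam : ℝ := (1-θ)*r/q with hlamd
    have he1nn : 0 ≤ e1 :=
      div_nonneg (mul_nonneg (by linarith) hp0.le) hq0.le
    have he2nn : 0 ≤ e2 :=
      div_nonneg (mul_nonneg (mul_nonneg hθ0.le hp0.le) h2q.le) (by linarith)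
    have he12 : e1 + e2 = 1 := by
      rw [he1d, he2d]
      field_simp
      linear_combination (-1) * hpP
    have hlam0 : 0 ≤ lam :=
      div_nonneg (mul_nonneg (by linarith) hr0.le) hq0.le
    have hlam1 : lam ≤ 1 := by
      rw [hlamd]
      rw [div_le_one hq0]
      nlinarith [hrP, mul_pos hθ0 (mul_pos hq0 hr0)]
    have hexp : q * lam + 2*(1-lam) = r := by
      rw [hlamd]
      field_simp
      linear_combination hrP
    have hth : (1 - lam) * (p/r) = θ*p/2 := by
      rw [hlamd]
      field_simp
      linear_combination hrP
    have hl : lam * (p/r) = e1 := by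
      rw [hlamd, he1d]
      field_simp
    have hee : e2 * (q/(2-q)) = θ*p/2 := by
      rw [he2d]
      field_simp
    -- the interpolation chain
    have step_k : ∀ k, (∑ i, |g k i| ^ r) ^ (p/r) ≤
        (∑ i, |g k i| ^ q) ^ e1 * ((∑ i, |g k i| ^ (2:ℝ)) ^ (q/(2-q))) ^ e2 := by
      intro k
      have hAnn : (0:ℝ) ≤ ∑ i, |g k i| ^ q :=
        Finset.sum_nonneg fun i _ => Real.rpow_nonneg (abs_nonneg _) _
      have hCnn : (0:ℝ) ≤ ∑ i, |g k i| ^ (2:ℝ) :=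
        Finset.sum_nonneg fun i _ => Real.rpow_nonneg (abs_nonneg _) _
      have hint : (∑ i, |g k i| ^ r) ≤
          (∑ i, |g k i| ^ q) ^ lam * (∑ i, |g k i| ^ (2:ℝ)) ^ (1-lam) := by
        have H := hoelder_lam Finset.univ (fun i => |g k i| ^ q) (fun i => |g k i| ^ (2:ℝ))
          (fun i _ => Real.rpow_nonneg (abs_nonneg _) _)
          (fun i _ => Real.rpow_nonneg (abs_nonneg _) _) hlam0 hlam1
        refine le_trans (le_of_eq ?_) H
        refine Finset.sum_congr rfl fun i _ => ?_
        rw [← hexp, Real.rpow_add' (abs_nonneg _) (by rw [hexp]; linarith),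
          Real.rpow_mul (abs_nonneg _), Real.rpow_mul (abs_nonneg _)]
      calc (∑ i, |g k i| ^ r) ^ (p/r)
          ≤ ((∑ i, |g k i| ^ q) ^ lam * (∑ i, |g k i| ^ (2:ℝ)) ^ (1-lam)) ^ (p/r) :=
            Real.rpow_le_rpow (Finset.sum_nonneg fun i _ => Real.rpow_nonneg (abs_nonneg _) _)
              hint (by positivity)
        _ = (∑ i, |g k i| ^ q) ^ (lam*(p/r)) * (∑ i, |g k i| ^ (2:ℝ)) ^ ((1-lam)*(p/r)) := by
            rw [Real.mul_rpow (Real.rpow_nonneg hAnn _) (Real.rpow_nonneg hCnn _),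
              ← Real.rpow_mul hAnn, ← Real.rpow_mul hCnn]
        _ = (∑ i, |g k i| ^ q) ^ e1 * ((∑ i, |g k i| ^ (2:ℝ)) ^ (q/(2-q))) ^ e2 := by
            rw [hl, hth, ← hee, mul_comm e2 (q/(2-q)), Real.rpow_mul hCnn]
    have hAnn' : (0:ℝ) ≤ ∑ k, ∑ i, |g k i| ^ q :=
      Finset.sum_nonneg fun k _ => Finset.sum_nonneg fun i _ => Real.rpow_nonneg (abs_nonneg _) _
    have hBnn' : (0:ℝ) ≤ ∑ k, (∑ i, |g k i| ^ (2:ℝ)) ^ (q/(2-q)) :=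
      Finset.sum_nonneg fun k _ => Real.rpow_nonneg
        (Finset.sum_nonneg fun i _ => Real.rpow_nonneg (abs_nonneg _) _) _
    have he1le : e1 ≤ 1 := by linarith
    calc ∑ k, (∑ i, |g k i| ^ r) ^ (p/r)
        ≤ ∑ k, (∑ i, |g k i| ^ q) ^ e1 * ((∑ i, |g k i| ^ (2:ℝ)) ^ (q/(2-q))) ^ e2 :=
          Finset.sum_le_sum fun k _ => step_k k
      _ ≤ (∑ k, ∑ i, |g k i| ^ q) ^ e1 *
            (∑ k, (∑ i, |g k i| ^ (2:ℝ)) ^ (q/(2-q))) ^ e2 := by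
          have H := hoelder_lam Finset.univ (fun k => ∑ i, |g k i| ^ q)
            (fun k => (∑ i, |g k i| ^ (2:ℝ)) ^ (q/(2-q)))
            (fun k _ => Finset.sum_nonneg fun i _ => Real.rpow_nonneg (abs_nonneg _) _)
            (fun k _ => Real.rpow_nonneg
              (Finset.sum_nonneg fun i _ => Real.rpow_nonneg (abs_nonneg _) _) _)
            (lam := e1) he1nn he1le
          have he2e : (1:ℝ) - e1 = e2 := by linarith
          rw [← he2e]
          exact H
      _ ≤ (n:ℝ) ^ e1 * (n:ℝ) ^ e2 := by
          refine mul_le_mul (Real.rpow_le_rpow hAnn' hA he1nn)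
            (Real.rpow_le_rpow hBnn' hB he2nn) (Real.rpow_nonneg hBnn' _)
            (Real.rpow_nonneg (Nat.cast_nonneg n) _)
      _ = (n:ℝ) := by
          rw [← Real.rpow_add' (Nat.cast_nonneg n) (by rw [he12]; norm_num), he12,
            Real.rpow_one]


/-- From an `ℝ≥0∞` bound `eSum_q ≤ 1` to the real bound. -/
lemma eSum_le_one_real {q : ℝ} (hq0 : 0 < q) {m : ℕ} (f : Fin m → ℝ)
    (hf : ∀ k, 0 ≤ f k)
    (h : eSum (ENNReal.ofReal q) (fun k => ENNReal.ofReal (f k)) ≤ 1) :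
    ∑ k, (f k) ^ q ≤ 1 := by
  rw [eSum, if_neg ENNReal.ofReal_ne_top, ENNReal.toReal_ofReal hq0.le] at h
  have h2 := ENNReal.rpow_le_rpow h hq0.le
  rw [ENNReal.one_rpow, ← ENNReal.rpow_mul, one_div_mul_cancel (ne_of_gt hq0),
    ENNReal.rpow_one] at h2
  have h3 : ∀ k, (ENNReal.ofReal (f k)) ^ q = ENNReal.ofReal ((f k) ^ q) := by
    intro k
    rw [ENNReal.ofReal_rpow_of_nonneg (hf k) hq0.le]
  rw [Finset.sum_congr rfl fun k _ => h3 k] at h2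
  rw [← ENNReal.ofReal_sum_of_nonneg (fun k _ => Real.rpow_nonneg (hf k) _)] at h2
  exact ENNReal.ofReal_le_one.mp h2

/-- Bound for a single functional in the dual unit ball. -/
lemma weak_single {q : ℝ} (hq0 : 0 < q) {q' : ℝ≥0∞} [Fact (1 ≤ q')] {n m : ℕ}
    (x : Fin m → PiLp q' (fun _ : Fin n => ℝ))
    (hx : weakLq (ENNReal.ofReal q) x ≤ 1)
    (F : PiLp q' (fun _ : Fin n => ℝ) →L[ℝ] ℝ) (hF : ‖F‖ ≤ 1) :
    ∑ k, |F (x k)| ^ q ≤ 1 := by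
  have h := le_trans (le_iSup (fun f : {f : PiLp q' (fun _ : Fin n => ℝ) →L[ℝ] ℝ // ‖f‖ ≤ 1} =>
      eSum (ENNReal.ofReal q) fun k => ENNReal.ofReal |f.1 (x k)|) ⟨F, hF⟩) hx
  exact eSum_le_one_real hq0 _ (fun k => abs_nonneg _) h

def funcA {n : ℕ} (q' : ℝ≥0∞) [Fact (1 ≤ q')] (a : Fin n → ℝ) :
    PiLp q' (fun _ : Fin n => ℝ) →L[ℝ] ℝ :=
  ∑ i, a i • (PiLp.proj q' (𝕜 := ℝ) (β := fun _ : Fin n => ℝ) i)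

lemma funcA_apply {n : ℕ} (q' : ℝ≥0∞) [Fact (1 ≤ q')] (a : Fin n → ℝ)
    (z : PiLp q' (fun _ : Fin n => ℝ)) : funcA q' a z = ∑ i, a i * z i := by
  simp [funcA, ContinuousLinearMap.sum_apply, PiLp.proj_apply, smul_eq_mul]
lemma funcA_norm_inf {n : ℕ} (a : Fin n → ℝ) (h : ∑ i, |a i| ≤ 1) :
    ‖funcA (∞ : ℝ≥0∞) a‖ ≤ 1 := by
  refine ContinuousLinearMap.opNorm_le_bound _ zero_le_one fun z => ?_
  rw [funcA_apply, one_mul]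
  have hz : ∀ i, |z i| ≤ ‖z‖ := by
    intro i
    rw [PiLp.norm_eq_ciSup]
    have h2 : ‖z i‖ ≤ ⨆ j, ‖z j‖ :=
      le_ciSup (f := fun j => ‖z j‖) (Set.Finite.bddAbove (Set.finite_range _)) i
    simpa using h2
  calc |∑ i, a i * z i| ≤ ∑ i, |a i * z i| := Finset.abs_sum_le_sum_abs _ _
    _ = ∑ i, |a i| * |z i| := Finset.sum_congr rfl fun i _ => abs_mul _ _
    _ ≤ ∑ i, |a i| * ‖z‖ :=
        Finset.sum_le_sum fun i _ => mul_le_mul_of_nonneg_left (hz i) (abs_nonneg _)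
    _ = (∑ i, |a i|) * ‖z‖ := by rw [Finset.sum_mul]
    _ ≤ 1 * ‖z‖ := mul_le_mul_of_nonneg_right h (norm_nonneg _)
    _ = ‖z‖ := one_mul _

lemma funcA_norm_fin {q qc : ℝ} (hq : 1 < q) (hqc : qc = q/(q-1)) {q' : ℝ≥0∞}
    [Fact (1 ≤ q')] (hq'e : q' = ENNReal.ofReal qc) {n : ℕ} (a : Fin n → ℝ)
    (h : ∑ i, |a i| ^ q ≤ 1) :
    ‖funcA q' a‖ ≤ 1 := by
  have hq0 : (0:ℝ) < q := lt_trans one_pos hq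
  have hqc0 : (0:ℝ) < qc := by rw [hqc]; exact div_pos hq0 (by linarith)
  have htR : q'.toReal = qc := by rw [hq'e, ENNReal.toReal_ofReal hqc0.le]
  have hnorm : ∀ z : PiLp q' (fun _ : Fin n => ℝ), ‖z‖ = (∑ i, |z i| ^ qc) ^ (1/qc) := by
    intro z
    rw [PiLp.norm_eq_sum (by rw [htR]; exact hqc0) z, htR]
    simp [Real.norm_eq_abs]
  refine ContinuousLinearMap.opNorm_le_bound _ zero_le_one fun z => ?_
  rw [funcA_apply, one_mul, hnorm z]
  have hpq : Real.HolderConjugate q qc := Real.holderConjugate_iff.mpr ⟨hq, by rw [hqc]; field_simp; ring⟩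
  have hznn : (0:ℝ) ≤ ∑ i, |z i| ^ qc :=
    Finset.sum_nonneg fun i _ => Real.rpow_nonneg (abs_nonneg _) _
  calc |∑ i, a i * z i| ≤ ∑ i, |a i * z i| := Finset.abs_sum_le_sum_abs _ _
    _ = ∑ i, |a i| * |z i| := Finset.sum_congr rfl fun i _ => abs_mul _ _
    _ ≤ (∑ i, |a i| ^ q) ^ (1/q) * (∑ i, |z i| ^ qc) ^ (1/qc) :=
        Real.inner_le_Lp_mul_Lq_of_nonneg (s := Finset.univ) hpq
          (fun i _ => abs_nonneg _) (fun i _ => abs_nonneg _)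
    _ ≤ 1 * (∑ i, |z i| ^ qc) ^ (1/qc) := by
        refine mul_le_mul_of_nonneg_right ?_ (Real.rpow_nonneg hznn _)
        exact Real.rpow_le_one
          (Finset.sum_nonneg fun i _ => Real.rpow_nonneg (abs_nonneg _) _) h (by positivity)
    _ = (∑ i, |z i| ^ qc) ^ (1/qc) := one_mul _

lemma qprime_eq {q : ℝ} (hq1 : 1 ≤ q) {q' : ℝ≥0∞}
    (hconj : 1 / ENNReal.ofReal q + 1 / q' = 1) :
    (q = 1 ∧ q' = ∞) ∨ (1 < q ∧ q' = ENNReal.ofReal (q/(q-1))) := by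
  have hq0 : (0:ℝ) < q := by linarith
  rcases eq_or_lt_of_le hq1 with hq1e | hq1s
  · left
    refine ⟨hq1e.symm, ?_⟩
    rw [← hq1e] at hconj
    rw [ENNReal.ofReal_one] at hconj
    norm_num at hconj
    have h0 : (1:ℝ≥0∞) + q'⁻¹ = 1 + 0 := by rw [hconj, add_zero, ENNReal.inv_top, add_zero]
    have h1 : q'⁻¹ = 0 := (ENNReal.add_right_inj ENNReal.one_ne_top).mp h0
    exact ENNReal.inv_eq_zero.mp h1
  · right
    refine ⟨hq1s, ?_⟩
    have h1' : ENNReal.ofReal (1/q) = 1 / ENNReal.ofReal q := by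
      rw [one_div, one_div, ENNReal.ofReal_inv_of_pos hq0]
    have h1 : ENNReal.ofReal (1/q) + 1/q' = 1 := by
      rw [h1']; exact hconj
    have h2 : ENNReal.ofReal (1/q) + ENNReal.ofReal (1 - 1/q) = 1 := by
      rw [← ENNReal.ofReal_add (by positivity) (by
        have : 1/q ≤ 1 := by rw [div_le_one hq0]; linarith
        linarith)]
      norm_num
    have h3 : 1/q' = ENNReal.ofReal (1 - 1/q) :=
      (ENNReal.add_right_inj ENNReal.ofReal_ne_top).mp (h1.trans h2.symm)
    have h1q : (0:ℝ) < 1 - 1/q := by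
      have : 1/q < 1 := by rw [div_lt_one hq0]; linarith
      linarith
    have h4 : q' = (ENNReal.ofReal (1 - 1/q))⁻¹ := by
      rw [← h3, one_div, inv_inv]
    rw [← ENNReal.ofReal_inv_of_pos h1q] at h4
    have h5 : (1 - 1/q)⁻¹ = q/(q-1) := by
      field_simp
    rw [h4, h5]
lemma weak_to_W {q : ℝ} (hq1 : 1 ≤ q) {q' : ℝ≥0∞} [Fact (1 ≤ q')]
    (hconj : 1 / ENNReal.ofReal q + 1 / q' = 1) {n m : ℕ}
    (x : Fin m → PiLp q' (fun _ : Fin n => ℝ))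
    (hx : weakLq (ENNReal.ofReal q) x ≤ 1) :
    ∀ a : Fin n → ℝ, (∑ i, |a i| ^ q) ≤ 1 → ∑ k, |∑ i, a i * x k i| ^ q ≤ 1 := by
  intro a ha
  have hq0 : (0:ℝ) < q := by linarith
  have hFnorm : ‖funcA q' a‖ ≤ 1 := by
    rcases qprime_eq hq1 hconj with ⟨hq1e, hq'⟩ | ⟨hq1s, hq'⟩
    · subst hq'
      subst hq1e
      apply funcA_norm_inf
      simpa [Real.rpow_one] using ha
    · exact funcA_norm_fin hq1s rfl hq' a ha
  have h := weak_single hq0 x hx (funcA q' a) hFnorm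
  calc ∑ k, |∑ i, a i * x k i| ^ q = ∑ k, |funcA q' a (x k)| ^ q :=
        Finset.sum_congr rfl fun k _ => by rw [funcA_apply]
    _ ≤ 1 := h


/-- for `0 < θ < 1`, `1 ≤ q ≤ 2`, `1 ≤ r ≤ 2` with
`1/r = (1-θ)/q + θ/2` and `1/p = 1/q - θ/2` (`p ≥ q`), the canonical identity
`ι : ℓ_{q'}^n → ℓ_r^n` satisfies `π_{p,q}(ι) ≤ n^{1/p}`. -/
theorem statement15 (θ q r p : ℝ) (q' : ℝ≥0∞) (hθ0 : 0 < θ) (hθ1 : θ < 1)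
    (hq1 : 1 ≤ q) (hq2 : q ≤ 2) (hr1 : 1 ≤ r) (hr2 : r ≤ 2)
    (hconj : 1 / ENNReal.ofReal q + 1 / q' = 1) (hq' : 1 ≤ q')
    (hrθ : 1 / r = (1 - θ) / q + θ / 2) (hpθ : 1 / p = 1 / q - θ / 2)
    (hqp : q ≤ p) (n : ℕ) :
    haveI : Fact (1 ≤ q') := ⟨hq'⟩
    haveI : Fact (1 ≤ ENNReal.ofReal r) := ⟨ENNReal.one_le_ofReal.mpr hr1⟩
    ∀ ι : PiLp q' (fun _ : Fin n => ℝ) →L[ℝ] PiLp (ENNReal.ofReal r) (fun _ : Fin n => ℝ),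
      (∀ (x : PiLp q' (fun _ : Fin n => ℝ)) (i : Fin n), ι x i = x i) →
      piPQ (ENNReal.ofReal p) (ENNReal.ofReal q) ι ≤ (n : ℝ≥0∞) ^ (1 / p) := by
  intro ι hι
  haveI : Fact (1 ≤ q') := ⟨hq'⟩
  haveI : Fact (1 ≤ ENNReal.ofReal r) := ⟨ENNReal.one_le_ofReal.mpr hr1⟩
  have hq0 : (0:ℝ) < q := by linarith
  have hr0 : (0:ℝ) < r := by linarith
  have hp0 : (0:ℝ) < p := by
    have h12 : (1:ℝ)/2 ≤ 1/q := one_div_le_one_div_of_le hq0 hq2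
    have h13 : 0 < 1/p := by rw [hpθ]; linarith
    exact one_div_pos.mp h13
  simp only [piPQ, piN]
  refine iSup_le fun m => iSup_le fun xs => ?_
  obtain ⟨x, hx⟩ := xs
  rw [eSum, if_neg ENNReal.ofReal_ne_top, ENNReal.toReal_ofReal hp0.le]
  have hW := weak_to_W hq1 hconj x hx
  have hreal : ∑ k, ‖ι (x k)‖ ^ p ≤ (n:ℝ) := by
    have hnorm : ∀ k, ‖ι (x k)‖ ^ p = (∑ i, |x k i| ^ r) ^ (p/r) := by
      intro k
      have h1 : ‖ι (x k)‖ = (∑ i, |x k i| ^ r) ^ (1/r) := by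
        rw [PiLp.norm_eq_sum (p := ENNReal.ofReal r)
          (by rw [ENNReal.toReal_ofReal hr0.le]; exact hr0) (ι (x k)),
          ENNReal.toReal_ofReal hr0.le]
        congr 1
        refine Finset.sum_congr rfl fun i _ => ?_
        rw [hι (x k) i, Real.norm_eq_abs]
      rw [h1, ← Real.rpow_mul
        (Finset.sum_nonneg fun i _ => Real.rpow_nonneg (abs_nonneg _) _)]
      congr 1
      field_simp
    rw [Finset.sum_congr rfl fun k _ => hnorm k]
    exact real_main hθ0 hθ1 hq1 hq2 hr1 hrθ hpθ hqp (fun k i => x k i) hW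
  calc (∑ k, ENNReal.ofReal ‖ι (x k)‖ ^ p) ^ (1/p)
      = (ENNReal.ofReal (∑ k, ‖ι (x k)‖ ^ p)) ^ (1/p) := by
        rw [ENNReal.ofReal_sum_of_nonneg (fun k _ => Real.rpow_nonneg (norm_nonneg _) _)]
        congr 1
        exact Finset.sum_congr rfl fun k _ =>
          ENNReal.ofReal_rpow_of_nonneg (norm_nonneg _) hp0.le
    _ ≤ (ENNReal.ofReal (n:ℝ)) ^ (1/p) :=
        ENNReal.rpow_le_rpow (ENNReal.ofReal_le_ofReal hreal) (by positivity)
    _ = (n:ℝ≥0∞) ^ (1/p) := by rw [ENNReal.ofReal_natCast]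

end
end
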